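/- Let A = F₂⟨w,z⟩/(w², z²) be the quotient of the free noncommutative algebra on w, z over F₂ by the two-sided ideal generated by w² and z². Then left multiplication by the element wz + zw on A is injective. -/

import Mathlib

/-- Relations defining `A = F₂⟨w,z⟩/(w², z²)`. -/
inductive sqRel : FreeAlgebra (ZMod 2) (Fin 2) → FreeAlgebra (ZMod 2) (Fin 2) → Prop
  | wsq : sqRel (FreeAlgebra.ι (ZMod 2) 0 * FreeAlgebra.ι (ZMod 2) 0) 0
  | zsq : sqRel (FreeAlgebra.ι (ZMod 2) 1 * FreeAlgebra.ι (ZMod 2) 1) 0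

/-- `A = F₂⟨w,z⟩/(w², z²)`. -/
abbrev sqAlg := RingQuot sqRel

noncomputable def wGen : sqAlg := RingQuot.mkRingHom sqRel (FreeAlgebra.ι (ZMod 2) 0)
noncomputable def zGen : sqAlg := RingQuot.mkRingHom sqRel (FreeAlgebra.ι (ZMod 2) 1)

/-! Auxiliary development: a module with basis the alternating words. -/

/-- Index type for alternating words: `none` is the empty word, `some (i, n)` is
the alternating word of length `n+1` starting with letter `i` (0 = w, 1 = z). -/
abbrev WIdx := Option (Fin 2 × ℕ)

abbrev Vsp := WIdx →₀ ZMod 2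

noncomputable def ebase (i : WIdx) : Vsp := Finsupp.single i 1

/-- Action of `w` on basis words. -/
noncomputable def wImg : WIdx → Vsp
  | none => ebase (some (0, 0))
  | some (i, n) => if i = 1 then ebase (some (0, n + 1)) else 0

/-- Action of `z` on basis words. -/
noncomputable def zImg : WIdx → Vsp
  | none => ebase (some (1, 0))
  | some (i, n) => if i = 0 then ebase (some (1, n + 1)) else 0

noncomputable def Wop : Vsp →ₗ[ZMod 2] Vsp := Finsupp.linearCombination (ZMod 2) wImg
noncomputable def Zop : Vsp →ₗ[ZMod 2] Vsp := Finsupp.linearCombination (ZMod 2) zImg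

lemma Wop_single (i : WIdx) (c : ZMod 2) : Wop (Finsupp.single i c) = c • wImg i := by
  simp [Wop, Finsupp.linearCombination_single]

lemma Zop_single (i : WIdx) (c : ZMod 2) : Zop (Finsupp.single i c) = c • zImg i := by
  simp [Zop, Finsupp.linearCombination_single]

lemma Wop_sq : Wop ∘ₗ Wop = 0 := by
  apply Finsupp.lhom_ext
  intro a b
  rcases a with _ | ⟨i, n⟩
  · simp [Wop_single, wImg, ebase, Finsupp.smul_single]
  · fin_cases i <;> simp [Wop_single, wImg, ebase, Finsupp.smul_single]

lemma Zop_sq : Zop ∘ₗ Zop = 0 := by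
  apply Finsupp.lhom_ext
  intro a b
  rcases a with _ | ⟨i, n⟩
  · simp [Zop_single, zImg, ebase, Finsupp.smul_single]
  · fin_cases i <;> simp [Zop_single, zImg, ebase, Finsupp.smul_single]

noncomputable def genOp : Fin 2 → Module.End (ZMod 2) Vsp := fun i => if i = 0 then Wop else Zop

noncomputable def rho : sqAlg →ₐ[ZMod 2] Module.End (ZMod 2) Vsp :=
  RingQuot.liftAlgHom (ZMod 2) ⟨FreeAlgebra.lift (ZMod 2) genOp, by
    intro x y h
    cases h with
    | wsq => have hW : Wop * Wop = 0 := Wop_sq; simpa [genOp] using hW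
    | zsq => have hZ : Zop * Zop = 0 := Zop_sq; simpa [genOp] using hZ⟩

lemma wGen_eq : wGen = RingQuot.mkAlgHom (ZMod 2) sqRel (FreeAlgebra.ι (ZMod 2) 0) := by
  rw [wGen, ← RingQuot.mkAlgHom_coe (ZMod 2) sqRel]; rfl

lemma zGen_eq : zGen = RingQuot.mkAlgHom (ZMod 2) sqRel (FreeAlgebra.ι (ZMod 2) 1) := by
  rw [zGen, ← RingQuot.mkAlgHom_coe (ZMod 2) sqRel]; rfl

lemma rho_wGen : rho wGen = Wop := by
  rw [wGen_eq, rho, RingQuot.liftAlgHom_mkAlgHom_apply, FreeAlgebra.lift_ι_apply]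
  simp [genOp]

lemma rho_zGen : rho zGen = Zop := by
  rw [zGen_eq, rho, RingQuot.liftAlgHom_mkAlgHom_apply, FreeAlgebra.lift_ι_apply]
  simp [genOp]

lemma wGen_sq : wGen * wGen = 0 := by
  have h := RingQuot.mkRingHom_rel sqRel.wsq
  rw [map_mul, map_zero] at h
  exact h

lemma zGen_sq : zGen * zGen = 0 := by
  have h := RingQuot.mkRingHom_rel sqRel.zsq
  rw [map_mul, map_zero] at h
  exact h

noncomputable def gg : Fin 2 → sqAlg := fun i => if i = 0 then wGen else zGen

/-- The alternating word of length `n+1` starting with letter `i`, as element of `sqAlg`. -/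
noncomputable def aw : ℕ → Fin 2 → sqAlg
  | 0, i => gg i
  | n + 1, i => gg i * aw n (i + 1)

noncomputable def wordVal : WIdx → sqAlg
  | none => 1
  | some (i, n) => aw n i

noncomputable def qmap : Vsp →ₗ[ZMod 2] sqAlg := Finsupp.linearCombination (ZMod 2) wordVal

lemma qmap_single (i : WIdx) (c : ZMod 2) : qmap (Finsupp.single i c) = c • wordVal i := by
  simp [qmap, Finsupp.linearCombination_single]

lemma wGen_aw_zero (n : ℕ) : wGen * aw n 0 = 0 := by
  cases n with
  | zero => simpa [aw, gg] using wGen_sq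
  | succ m => rw [aw]; simp [gg]; rw [← mul_assoc, wGen_sq, zero_mul]

lemma zGen_aw_zero (n : ℕ) : zGen * aw n 1 = 0 := by
  cases n with
  | zero => simpa [aw, gg] using zGen_sq
  | succ m => rw [aw]; simp [gg]; rw [← mul_assoc, zGen_sq, zero_mul]

lemma qmap_Wop (v : Vsp) : qmap (Wop v) = wGen * qmap v := by
  have h : qmap ∘ₗ Wop = LinearMap.mulLeft (ZMod 2) wGen ∘ₗ qmap := by
    apply Finsupp.lhom_ext
    intro a b
    rcases a with _ | ⟨i, n⟩
    · simp [Wop_single, qmap_single, wImg, wordVal, ebase, Finsupp.smul_single, aw, gg,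
        mul_smul_comm]
    · fin_cases i
      · simp [Wop_single, qmap_single, wImg, wordVal, mul_smul_comm, wGen_aw_zero]
      · simp [Wop_single, qmap_single, wImg, wordVal, ebase, Finsupp.smul_single,
          mul_smul_comm]
        rw [show aw (n + 1) 0 = wGen * aw n 1 by rw [aw, show ((0:Fin 2)+1) = 1 from rfl]; norm_num [gg]]
  exact congrFun (congrArg (fun f => f.toFun) h) v

lemma qmap_Zop (v : Vsp) : qmap (Zop v) = zGen * qmap v := by
  have h : qmap ∘ₗ Zop = LinearMap.mulLeft (ZMod 2) zGen ∘ₗ qmap := by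
    apply Finsupp.lhom_ext
    intro a b
    rcases a with _ | ⟨i, n⟩
    · simp [Zop_single, qmap_single, zImg, wordVal, ebase, Finsupp.smul_single, aw, gg,
        mul_smul_comm]
    · fin_cases i
      · simp [Zop_single, qmap_single, zImg, wordVal, ebase, Finsupp.smul_single,
          mul_smul_comm]
        rw [show aw (n + 1) 1 = zGen * aw n 0 by rw [aw, show ((1:Fin 2)+1) = 0 from rfl]; norm_num [gg]]
      · simp [Zop_single, qmap_single, zImg, wordVal, mul_smul_comm, zGen_aw_zero]
  exact congrFun (congrArg (fun f => f.toFun) h) v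

/-- Compatibility: `qmap` intertwines `rho` with left multiplication. -/
lemma qmap_rho (x : sqAlg) (v : Vsp) : qmap (rho x v) = x * qmap v := by
  obtain ⟨y, rfl⟩ := RingQuot.mkAlgHom_surjective (ZMod 2) sqRel x
  induction y using FreeAlgebra.induction generalizing v with
  | grade0 r =>
      rw [AlgHom.commutes, AlgHom.commutes, Module.algebraMap_end_apply, map_smul,
        Algebra.smul_def]
  | grade1 i =>
      have hi : i = 0 ∨ i = 1 := by omega
      rcases hi with rfl | rfl
      · rw [← wGen_eq, rho_wGen, qmap_Wop]
      · rw [← zGen_eq, rho_zGen, qmap_Zop]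
  | mul a b ha hb =>
      rw [map_mul, map_mul, Module.End.mul_apply, ha, hb, mul_assoc]
  | add a b ha hb =>
      rw [map_add, map_add, LinearMap.add_apply, map_add, ha, hb, add_mul]

/-- Left inverse of the action of `wz + zw` on basis words. -/
noncomputable def tImg : WIdx → Vsp
  | none => 0
  | some (_, 0) => 0
  | some (i, 1) => if i = 0 then ebase none else 0
  | some (i, n + 2) => ebase (some (i, n))

noncomputable def Tmap : Vsp →ₗ[ZMod 2] Vsp := Finsupp.linearCombination (ZMod 2) tImg

lemma Tmap_single (i : WIdx) (c : ZMod 2) : Tmap (Finsupp.single i c) = c • tImg i := by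
  simp [Tmap, Finsupp.linearCombination_single]

lemma Tmap_inv : Tmap ∘ₗ (Wop ∘ₗ Zop + Zop ∘ₗ Wop) = LinearMap.id := by
  apply Finsupp.lhom_ext
  intro a b
  rcases a with _ | ⟨i, n⟩
  · simp [Wop_single, Zop_single, Tmap_single, wImg, zImg, tImg, ebase, Finsupp.smul_single]
  · fin_cases i <;>
      simp [Wop_single, Zop_single, Tmap_single, wImg, zImg, tImg, ebase, Finsupp.smul_single]

/-- In `A = F₂⟨w,z⟩/(w², z²)`, left multiplication by `wz + zw` is injective. -/
theorem stmt_11 :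
    Function.Injective (fun a : sqAlg => (wGen * zGen + zGen * wGen) * a) := by
  intro a b h
  simp only at h
  have hz : (wGen * zGen + zGen * wGen) * (a - b) = 0 := by
    rw [mul_sub, h, sub_self]
  have hrho : rho ((wGen * zGen + zGen * wGen) * (a - b)) = 0 := by rw [hz, map_zero]
  set c := a - b with hc
  have h1 : (Wop ∘ₗ Zop + Zop ∘ₗ Wop) (rho c (ebase none)) = 0 := by
    have : rho (wGen * zGen + zGen * wGen) (rho c (ebase none)) = 0 := by
      have := congrArg (fun f : Module.End (ZMod 2) Vsp => f (ebase none)) hrho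
      simpa [map_mul, Module.End.mul_apply] using this
    rw [← this]
    simp [map_add, map_mul, rho_wGen, rho_zGen, Module.End.mul_apply]
  have h2 : rho c (ebase none) = 0 := by
    have := congrArg (fun f : Vsp →ₗ[ZMod 2] Vsp => f (rho c (ebase none))) Tmap_inv
    simp only [LinearMap.comp_apply, LinearMap.id_apply] at this
    rw [← this, h1, map_zero]
  have h3 : c = 0 := by
    have := qmap_rho c (ebase none)
    rw [h2, map_zero] at this
    have hq1 : qmap (ebase none) = 1 := by simp [ebase, qmap_single, wordVal]
    rw [hq1, mul_one] at this
    exact this.symm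
  have := sub_eq_zero.mp h3
  exact this
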